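/- Let w ∈ S_n be a smooth permutation (avoiding patterns 3412 and 4231) with associated Hessenberg function m_w. Then a transposition t = (i j) with i < j satisfies t ≤ w in Bruhat order if and only if j ≤ m_w(i). -/

import Mathlib

open Equiv

/-- `rk w i j` = #{k ≤ i : w(k) ≤ j} (1-indexed), for `w ∈ S_n`. -/
def rk {n : ℕ} (w : Equiv.Perm (Fin n)) (i j : ℕ) : ℕ :=
  (Finset.univ.filter (fun k : Fin n => (k : ℕ) + 1 ≤ i ∧ (w k : ℕ) + 1 ≤ j)).card

/-- Bruhat order on `S_n` via the rank-matrix criterion: `z ≤ w` iff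
`r_{i,j}(z) ≥ r_{i,j}(w)` for all `i,j`. -/
def BruhatLE {n : ℕ} (z w : Equiv.Perm (Fin n)) : Prop :=
  ∀ i ≤ n, ∀ j ≤ n, rk w i j ≤ rk z i j

def BruhatLT {n : ℕ} (z w : Equiv.Perm (Fin n)) : Prop :=
  BruhatLE z w ∧ z ≠ w

/-- Coxeter length = number of inversions. -/
def len {n : ℕ} (w : Equiv.Perm (Fin n)) : ℕ :=
  (Finset.univ.filter (fun p : Fin n × Fin n => p.1 < p.2 ∧ w p.2 < w p.1)).card

/-- One-line notation of `w`, 1-indexed, extended by the identity outside `[1,n]`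
(so that `w(n+1) = n+1`). -/
def ol {n : ℕ} (w : Equiv.Perm (Fin n)) (k : ℕ) : ℕ :=
  if h : 1 ≤ k ∧ k ≤ n then ((w ⟨k - 1, by omega⟩ : Fin n) : ℕ) + 1 else k

/-- The coessential set of `w` (1-indexed pairs). -/
def Coess {n : ℕ} (w : Equiv.Perm (Fin n)) : Set (ℕ × ℕ) :=
  {p | 1 ≤ p.1 ∧ p.1 ≤ n ∧ 1 ≤ p.2 ∧ p.2 ≤ n ∧
    ol w p.1 ≤ p.2 ∧ p.2 < ol w (p.1 + 1) ∧
    ol w⁻¹ p.2 ≤ p.1 ∧ p.1 < ol w⁻¹ (p.2 + 1)}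

/-- `w` contains the pattern 312. -/
def Has312 {n : ℕ} (w : Equiv.Perm (Fin n)) : Prop :=
  ∃ a b c : Fin n, a < b ∧ b < c ∧ w b < w c ∧ w c < w a

/-- `w` contains the pattern 3412. -/
def Has3412 {n : ℕ} (w : Equiv.Perm (Fin n)) : Prop :=
  ∃ a b c d : Fin n, a < b ∧ b < c ∧ c < d ∧ w c < w d ∧ w d < w a ∧ w a < w b

/-- `w` contains the pattern 4231. -/
def Has4231 {n : ℕ} (w : Equiv.Perm (Fin n)) : Prop :=
  ∃ a b c d : Fin n, a < b ∧ b < c ∧ c < d ∧ w d < w b ∧ w b < w c ∧ w c < w a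

/-- `w` is smooth iff it avoids 3412 and 4231. -/
def SmoothPerm {n : ℕ} (w : Equiv.Perm (Fin n)) : Prop := ¬ Has3412 w ∧ ¬ Has4231 w

/-- `w` is codominant iff `i ≤ j` for every `(i,j)` in the coessential set. -/
def Codominant {n : ℕ} (w : Equiv.Perm (Fin n)) : Prop :=
  ∀ p ∈ Coess w, p.1 ≤ p.2

/-- Lexicographic comparison on one-line notations. -/
def LexLe {n : ℕ} (u w : Equiv.Perm (Fin n)) : Prop :=
  u = w ∨ ∃ i : Fin n, (∀ j < i, u j = w j) ∧ u i < w i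

/-- `m` is a Hessenberg function (0-indexed): non-decreasing and `m i ≥ i`. -/
def Hess {n : ℕ} (m : Fin n → Fin n) : Prop :=
  Monotone m ∧ ∀ i, i ≤ m i

/-- `w` is the lexicographically greatest permutation with `w i ≤ m i` for all `i`. -/
def IsLexMax {n : ℕ} (m : Fin n → Fin n) (w : Equiv.Perm (Fin n)) : Prop :=
  (∀ i, w i ≤ m i) ∧ ∀ u : Equiv.Perm (Fin n), (∀ i, u i ≤ m i) → LexLe u w

instance {n : ℕ} (z w : Equiv.Perm (Fin n)) : Decidable (BruhatLE z w) := by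
  unfold BruhatLE; exact Nat.decidableBallLE _ _

theorem Equiv.Perm.inv_apply_self {α : Type*} (f : Equiv.Perm α) (x : α) : f⁻¹ (f x) = x :=
  Equiv.symm_apply_apply f x

theorem Equiv.Perm.apply_inv_self {α : Type*} (f : Equiv.Perm α) (x : α) : f (f⁻¹ x) = x :=
  Equiv.apply_symm_apply f x


section rkLemmas
variable {n : ℕ} (w : Equiv.Perm (Fin n))

lemma rk_symm (p q : ℕ) : rk w p q = rk w⁻¹ q p := by
  unfold rk
  apply Finset.card_bij (fun k _ => w k)
  · intro a ha
    simp only [Finset.mem_filter, Finset.mem_univ, true_and] at ha ⊢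
    simpa using ha.symm
  · intro a _ b _ h; exact w.injective h
  · intro b hb
    refine ⟨w⁻¹ b, ?_, by simp⟩
    simp only [Finset.mem_filter, Finset.mem_univ, true_and] at hb ⊢
    simpa using hb.symm

lemma card_lt_filter {m : ℕ} (hm : m ≤ n) :
    (Finset.univ.filter (fun k : Fin n => (k : ℕ) < m)).card = m := by
  conv_rhs => rw [show m = (Finset.range m).card by simp]
  refine Finset.card_bij (fun k _ => (k : ℕ)) ?_ ?_ ?_ <;> simp only [Finset.mem_filter, Finset.mem_univ, true_and]
  · intro a ha; simpa using ha
  · intro a _ b _ h; exact Fin.ext h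
  · intro b hb; simp only [Finset.mem_range] at hb; exact ⟨⟨b, lt_of_lt_of_le hb hm⟩, by simpa using hb, rfl⟩

lemma rk_le_left (p q : ℕ) : rk w p q ≤ p := by
  rcases le_or_gt p n with hp | hp
  · calc rk w p q ≤ (Finset.univ.filter (fun k : Fin n => (k : ℕ) < p)).card := by
          apply Finset.card_le_card; intro k hk
          simp only [Finset.mem_filter, Finset.mem_univ, true_and] at hk ⊢; omega
      _ = p := card_lt_filter hp
  · calc rk w p q ≤ Finset.univ.card := Finset.card_le_card (Finset.filter_subset _ _)
      _ = n := by simp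
      _ ≤ p := hp.le

lemma rk_le_right (p q : ℕ) : rk w p q ≤ q := by
  rw [rk_symm]; exact rk_le_left _ _ _

lemma rk_full_iff {p q : ℕ} (hp : p ≤ n) :
    rk w p q = p ↔ ∀ k : Fin n, (k : ℕ) < p → (w k : ℕ) + 1 ≤ q := by
  constructor
  · intro h k hk
    unfold rk at h
    have hsub : (Finset.univ.filter (fun k : Fin n => (k : ℕ) + 1 ≤ p ∧ (w k : ℕ) + 1 ≤ q))
        ⊆ (Finset.univ.filter (fun k : Fin n => (k : ℕ) < p)) := by
      intro x hx; simp only [Finset.mem_filter, Finset.mem_univ, true_and] at hx ⊢; omega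
    have := Finset.eq_of_subset_of_card_le hsub (by rw [h, card_lt_filter hp])
    have hk' : k ∈ (Finset.univ.filter (fun k : Fin n => (k : ℕ) < p)) := by simp [hk]
    rw [← this] at hk'
    simp only [Finset.mem_filter, Finset.mem_univ, true_and] at hk'; exact hk'.2
  · intro h
    unfold rk
    conv_rhs => rw [← card_lt_filter (n := n) hp]
    congr 1
    ext k
    simp only [Finset.mem_filter, Finset.mem_univ, true_and]
    constructor
    · intro hh; omega
    · intro hh; exact ⟨hh, h k hh⟩

lemma rk_full_iff' {p q : ℕ} (hq : q ≤ n) :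
    rk w p q = q ↔ ∀ k : Fin n, (k : ℕ) < q → (w⁻¹ k : ℕ) + 1 ≤ p := by
  rw [rk_symm]; exact rk_full_iff _ hq

end rkLemmas
section swapLemmas
variable {n : ℕ} (w : Equiv.Perm (Fin n)) (i j : Fin n)

lemma swap_rk_box_lt (hij : i < j) {p q : ℕ} (hip : (i:ℕ) < p) (hpj : p ≤ (j:ℕ))
    (hiq : (i:ℕ) < q) (hqj : q ≤ (j:ℕ)) : rk (Equiv.swap i j) p q + 1 ≤ min p q := by
  set m := min p q with hm
  have hmn : m ≤ n := le_trans (le_trans (min_le_right p q) hqj) (le_of_lt j.isLt)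
  have hsub : (Finset.univ.filter (fun k : Fin n => (k : ℕ) + 1 ≤ p ∧ ((Equiv.swap i j) k : ℕ) + 1 ≤ q))
      ⊆ (Finset.univ.filter (fun k : Fin n => (k : ℕ) < m)).erase i := by
    intro k hk
    simp only [Finset.mem_filter, Finset.mem_univ, true_and] at hk
    rcases eq_or_ne k i with rfl | hki
    · rw [Equiv.swap_apply_left] at hk; omega
    rcases eq_or_ne k j with rfl | hkj
    · omega
    · rw [Equiv.swap_apply_of_ne_of_ne hki hkj] at hk
      rw [Finset.mem_erase]
      refine ⟨hki, ?_⟩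
      simp only [Finset.mem_filter, Finset.mem_univ, true_and]
      omega
  have hcard := Finset.card_le_card hsub
  have hi_mem : i ∈ (Finset.univ.filter (fun k : Fin n => (k : ℕ) < m)) := by
    simp only [Finset.mem_filter, Finset.mem_univ, true_and]; omega
  rw [Finset.card_erase_of_mem hi_mem, card_lt_filter hmn] at hcard
  have : 1 ≤ m := by omega
  unfold rk
  omega

lemma swap_rk_box_ge (hij : i < j) {p q : ℕ} (hip : (i:ℕ) < p) (hpj : p ≤ (j:ℕ))
    (hiq : (i:ℕ) < q) (hqj : q ≤ (j:ℕ)) : min p q ≤ rk (Equiv.swap i j) p q + 1 := by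
  set m := min p q with hm
  have hmn : m ≤ n := le_trans (le_trans (min_le_right p q) hqj) (le_of_lt j.isLt)
  have hsub : (Finset.univ.filter (fun k : Fin n => (k : ℕ) < m)).erase i
      ⊆ (Finset.univ.filter (fun k : Fin n => (k : ℕ) + 1 ≤ p ∧ ((Equiv.swap i j) k : ℕ) + 1 ≤ q)) := by
    intro k hk
    rw [Finset.mem_erase] at hk
    obtain ⟨hki, hk⟩ := hk
    simp only [Finset.mem_filter, Finset.mem_univ, true_and] at hk ⊢
    have hkj : k ≠ j := by
      intro h; subst h; omega
    rw [Equiv.swap_apply_of_ne_of_ne hki hkj]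
    omega
  have hcard := Finset.card_le_card hsub
  have hi_mem : i ∈ (Finset.univ.filter (fun k : Fin n => (k : ℕ) < m)) := by
    simp only [Finset.mem_filter, Finset.mem_univ, true_and]; omega
  rw [Finset.card_erase_of_mem hi_mem, card_lt_filter hmn] at hcard
  unfold rk
  omega

lemma swap_rk_nbox_ge (hij : i < j) {p q : ℕ} (hp : p ≤ n) (hq : q ≤ n)
    (hnbox : ¬((i:ℕ) < p ∧ p ≤ (j:ℕ) ∧ (i:ℕ) < q ∧ q ≤ (j:ℕ))) :
    min p q ≤ rk (Equiv.swap i j) p q := by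
  set m := min p q with hm
  have hmn : m ≤ n := le_trans (min_le_left p q) hp
  -- helper to conclude from a subset of card m
  have key : ∀ s : Finset (Fin n), s.card = m →
      s ⊆ (Finset.univ.filter (fun k : Fin n => (k : ℕ) + 1 ≤ p ∧ ((Equiv.swap i j) k : ℕ) + 1 ≤ q)) →
      m ≤ rk (Equiv.swap i j) p q := by
    intro s hcard hsub
    have := Finset.card_le_card hsub
    unfold rk; omega
  by_cases hmi : m ≤ (i:ℕ)
  · apply key (Finset.univ.filter (fun k : Fin n => (k : ℕ) < m)) (card_lt_filter hmn) ?_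
    intro k hk
    simp only [Finset.mem_filter, Finset.mem_univ, true_and] at hk ⊢
    have hki : k ≠ i := by intro h; subst h; omega
    have hkj : k ≠ j := by intro h; subst h; omega
    rw [Equiv.swap_apply_of_ne_of_ne hki hkj]; omega
  by_cases hjm : (j:ℕ) < m
  · apply key (Finset.univ.filter (fun k : Fin n => (k : ℕ) < m)) (card_lt_filter hmn) ?_
    intro k hk
    simp only [Finset.mem_filter, Finset.mem_univ, true_and] at hk ⊢
    rcases eq_or_ne k i with rfl | hki
    · rw [Equiv.swap_apply_left]; omega
    rcases eq_or_ne k j with rfl | hkj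
    · rw [Equiv.swap_apply_right]; omega
    · rw [Equiv.swap_apply_of_ne_of_ne hki hkj]; omega
  -- now i < m ≤ j
  push_neg at hmi
  push_neg at hjm
  have hcase : (j:ℕ) < q ∨ (j:ℕ) < p := by omega
  rcases hcase with hjq | hjp
  · apply key (Finset.univ.filter (fun k : Fin n => (k : ℕ) < m)) (card_lt_filter hmn) ?_
    intro k hk
    simp only [Finset.mem_filter, Finset.mem_univ, true_and] at hk ⊢
    rcases eq_or_ne k i with rfl | hki
    · rw [Equiv.swap_apply_left]; omega
    have hkj : k ≠ j := by intro h; subst h; omega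
    rw [Equiv.swap_apply_of_ne_of_ne hki hkj]; omega
  · have hi_mem : i ∈ (Finset.univ.filter (fun k : Fin n => (k : ℕ) < m)) := by
      simp only [Finset.mem_filter, Finset.mem_univ, true_and]; omega
    have hjne : j ∉ (Finset.univ.filter (fun k : Fin n => (k : ℕ) < m)).erase i := by
      simp only [Finset.mem_erase, Finset.mem_filter, Finset.mem_univ, true_and]
      intro h; omega
    apply key (insert j ((Finset.univ.filter (fun k : Fin n => (k : ℕ) < m)).erase i))
    · rw [Finset.card_insert_of_notMem hjne, Finset.card_erase_of_mem hi_mem, card_lt_filter hmn]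
      omega
    · intro k hk
      rcases Finset.mem_insert.1 hk with rfl | hk
      · simp only [Finset.mem_filter, Finset.mem_univ, true_and]
        rw [Equiv.swap_apply_right]; omega
      · rw [Finset.mem_erase] at hk
        obtain ⟨hki, hk⟩ := hk
        simp only [Finset.mem_filter, Finset.mem_univ, true_and] at hk ⊢
        have hkj : k ≠ j := by intro h; subst h; omega
        rw [Equiv.swap_apply_of_ne_of_ne hki hkj]; omega

lemma bruhat_swap_iff (w : Equiv.Perm (Fin n)) (hij : i < j) :
    BruhatLE (Equiv.swap i j) w ↔
      ∀ p q : ℕ, (i:ℕ) < p → p ≤ (j:ℕ) → (i:ℕ) < q → q ≤ (j:ℕ) → rk w p q < min p q := by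
  constructor
  · intro h p q hip hpj hiq hqj
    have hple : p ≤ n := le_trans hpj (le_of_lt j.isLt)
    have hqle : q ≤ n := le_trans hqj (le_of_lt j.isLt)
    have h1 := h p hple q hqle
    have h2 := swap_rk_box_lt i j hij hip hpj hiq hqj
    omega
  · intro h p hp q hq
    by_cases hbox : (i:ℕ) < p ∧ p ≤ (j:ℕ) ∧ (i:ℕ) < q ∧ q ≤ (j:ℕ)
    · have h1 := h p q hbox.1 hbox.2.1 hbox.2.2.1 hbox.2.2.2
      have h2 := swap_rk_box_ge i j hij hbox.1 hbox.2.1 hbox.2.2.1 hbox.2.2.2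
      omega
    · have h1 : rk w p q ≤ min p q := le_min (rk_le_left w p q) (rk_le_right w p q)
      have h2 := swap_rk_nbox_ge i j hij hp hq hbox
      omega

end swapLemmas
section QmaxLemmas
variable {n : ℕ}

def Qmax (w : Equiv.Perm (Fin n)) (i : Fin n) : Fin n :=
  (Finset.Iic i).sup' ⟨i, Finset.mem_Iic.2 le_rfl⟩ w

lemma le_Qmax (w : Equiv.Perm (Fin n)) {k i : Fin n} (h : k ≤ i) : w k ≤ Qmax w i :=
  Finset.le_sup' w (Finset.mem_Iic.2 h)

lemma Qmax_attained (w : Equiv.Perm (Fin n)) (i : Fin n) :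
    ∃ k, k ≤ i ∧ w k = Qmax w i := by
  obtain ⟨k, hk, hk2⟩ := Finset.exists_mem_eq_sup' ⟨i, Finset.mem_Iic.2 le_rfl⟩ w
  exact ⟨k, Finset.mem_Iic.1 hk, hk2.symm⟩

lemma self_le_Qmax (w : Equiv.Perm (Fin n)) (i : Fin n) : i ≤ Qmax w i := by
  by_contra h
  push_neg at h
  have hmaps : ∀ k ∈ Finset.Iic i, w k ∈ Finset.Iic (Qmax w i) := by
    intro k hk; exact Finset.mem_Iic.2 (le_Qmax w (Finset.mem_Iic.1 hk))
  have hcard := Finset.card_le_card_of_injOn w hmaps (w.injective.injOn)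
  rw [Fin.card_Iic, Fin.card_Iic] at hcard
  have : (Qmax w i : ℕ) < (i : ℕ) := h
  omega

lemma Qmax_mono (w : Equiv.Perm (Fin n)) {i i' : Fin n} (h : i ≤ i') :
    Qmax w i ≤ Qmax w i' := by
  obtain ⟨k, hk, hk2⟩ := Qmax_attained w i
  rw [← hk2]
  exact le_Qmax w (le_trans hk h)

lemma NF_iff (w : Equiv.Perm (Fin n)) {i j : Fin n} (hij : i ≤ j) :
    (∀ p q : ℕ, (i:ℕ) < p → p ≤ (j:ℕ) → (i:ℕ) < q → q ≤ (j:ℕ) → rk w p q < min p q) ↔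
      (j ≤ Qmax w i ∧ j ≤ Qmax w⁻¹ i) := by
  constructor
  · intro h
    rcases eq_or_lt_of_le hij with rfl | hij'
    · exact ⟨self_le_Qmax w i, self_le_Qmax w⁻¹ i⟩
    constructor
    · by_contra hc
      push_neg at hc
      have hq1 : (i:ℕ) < (Qmax w i : ℕ) + 1 := by
        have := self_le_Qmax w i; omega
      have hq2 : (Qmax w i : ℕ) + 1 ≤ (j : ℕ) := by
        have : (Qmax w i : ℕ) < (j : ℕ) := hc; omega
      have hfull : rk w ((i:ℕ)+1) ((Qmax w i : ℕ)+1) = (i:ℕ)+1 := by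
        rw [rk_full_iff w (by omega : (i:ℕ)+1 ≤ n)]
        intro k hk
        have : w k ≤ Qmax w i := le_Qmax w (by exact Fin.le_def.2 (by omega))
        omega
      have := h ((i:ℕ)+1) ((Qmax w i : ℕ)+1) (by omega) (by omega) hq1 hq2
      have hmin : min ((i:ℕ)+1) ((Qmax w i : ℕ)+1) = (i:ℕ)+1 := by
        have := self_le_Qmax w i
        have : (i:ℕ) ≤ (Qmax w i : ℕ) := this
        omega
      omega
    · by_contra hc
      push_neg at hc
      have hge : (i:ℕ) ≤ (Qmax w⁻¹ i : ℕ) := self_le_Qmax w⁻¹ i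
      have hq2 : (Qmax w⁻¹ i : ℕ) + 1 ≤ (j : ℕ) := by
        have : (Qmax w⁻¹ i : ℕ) < (j : ℕ) := hc; omega
      have hfull : rk w ((Qmax w⁻¹ i : ℕ)+1) ((i:ℕ)+1) = (i:ℕ)+1 := by
        rw [rk_full_iff' w (by omega : (i:ℕ)+1 ≤ n)]
        intro k hk
        have : w⁻¹ k ≤ Qmax w⁻¹ i := le_Qmax w⁻¹ (by exact Fin.le_def.2 (by omega))
        omega
      have := h ((Qmax w⁻¹ i : ℕ)+1) ((i:ℕ)+1) (by omega) (by omega) (by omega) (by omega)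
      have hmin : min ((Qmax w⁻¹ i : ℕ)+1) ((i:ℕ)+1) = (i:ℕ)+1 := by omega
      omega
  · rintro ⟨h1, h2⟩ p q hip hpj hiq hqj
    have hpn : p ≤ n := le_trans hpj (le_of_lt j.isLt)
    have hqn : q ≤ n := le_trans hqj (le_of_lt j.isLt)
    rcases le_or_gt p q with hpq | hqp
    · have hmin : min p q = p := by omega
      rw [hmin]
      rcases lt_or_eq_of_le (rk_le_left w p q) with h | h
      · exact h
      exfalso
      rw [rk_full_iff w hpn] at h
      obtain ⟨k, hk, hk2⟩ := Qmax_attained w i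
      have hkp : (k:ℕ) < p := by
        have : (k:ℕ) ≤ (i:ℕ) := hk; omega
      have := h k hkp
      have : (j:ℕ) ≤ (w k : ℕ) := by rw [hk2]; exact h1
      omega
    · have hmin : min p q = q := by omega
      rw [hmin]
      rcases lt_or_eq_of_le (rk_le_right w p q) with h | h
      · exact h
      exfalso
      rw [rk_full_iff' w hqn] at h
      obtain ⟨k, hk, hk2⟩ := Qmax_attained w⁻¹ i
      have hkq : (k:ℕ) < q := by
        have : (k:ℕ) ≤ (i:ℕ) := hk; omega
      have := h k hkq
      have : (j:ℕ) ≤ (w⁻¹ k : ℕ) := by rw [hk2]; exact h2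
      omega

lemma bruhat_swap_iff_Qmax (w : Equiv.Perm (Fin n)) {i j : Fin n} (hij : i < j) :
    BruhatLE (Equiv.swap i j) w ↔ (j ≤ Qmax w i ∧ j ≤ Qmax w⁻¹ i) := by
  rw [bruhat_swap_iff i j w hij, NF_iff w (le_of_lt hij)]

end QmaxLemmas
section InvLemmas
variable {n : ℕ}

lemma has3412_inv {w : Equiv.Perm (Fin n)} (h : Has3412 w) : Has3412 w⁻¹ := by
  obtain ⟨a, b, c, d, hab, hbc, hcd, h1, h2, h3⟩ := h
  refine ⟨w c, w d, w a, w b, h1, h2, h3, ?_, ?_, ?_⟩ <;>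
    simp only [Equiv.Perm.inv_apply_self]
  · exact hab
  · exact hbc
  · exact hcd

lemma has4231_inv {w : Equiv.Perm (Fin n)} (h : Has4231 w) : Has4231 w⁻¹ := by
  obtain ⟨a, b, c, d, hab, hbc, hcd, h1, h2, h3⟩ := h
  refine ⟨w d, w b, w c, w a, h1, h2, h3, ?_, ?_, ?_⟩ <;>
    simp only [Equiv.Perm.inv_apply_self]
  · exact hab
  · exact hbc
  · exact hcd

lemma smoothPerm_inv {w : Equiv.Perm (Fin n)} (h : SmoothPerm w) : SmoothPerm w⁻¹ := by
  constructor
  · intro hc; exact h.1 (by simpa using has3412_inv hc)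
  · intro hc; exact h.2 (by simpa using has4231_inv hc)

lemma ol_val (w : Equiv.Perm (Fin n)) (k : Fin n) : ol w ((k:ℕ)+1) = (w k : ℕ) + 1 := by
  unfold ol
  rw [dif_pos ⟨by omega, by have := k.isLt; omega⟩]
  congr 2

lemma ol_gt (w : Equiv.Perm (Fin n)) {k : ℕ} (h : n < k) : ol w k = k := by
  unfold ol
  rw [dif_neg (by omega)]

lemma lt_ol_succ_iff (w : Equiv.Perm (Fin n)) (x : Fin n) (t : ℕ) (ht : t < n) :
    (t + 1 < ol w ((x:ℕ)+1+1)) ↔ ∀ h : (x:ℕ)+1 < n, t < (w ⟨(x:ℕ)+1, h⟩ : ℕ) := by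
  by_cases h : (x:ℕ)+1 < n
  · have : ol w ((x:ℕ)+1+1) = (w ⟨(x:ℕ)+1, h⟩ : ℕ) + 1 := ol_val w ⟨(x:ℕ)+1, h⟩
    rw [this]
    constructor
    · intro hh _; omega
    · intro hh; have := hh h; omega
  · have hx : (x:ℕ)+1 = n := by have := x.isLt; omega
    rw [ol_gt w (by omega)]
    constructor
    · intro _ hc; exact absurd hc h
    · intro _; omega

lemma coess_iff (w : Equiv.Perm (Fin n)) (fi fj : Fin n) :
    ((fi:ℕ)+1, (fj:ℕ)+1) ∈ Coess w ↔
      ((w fi : ℕ) ≤ (fj:ℕ) ∧ (∀ h : (fi:ℕ)+1 < n, (fj:ℕ) < (w ⟨(fi:ℕ)+1, h⟩ : ℕ)) ∧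
       (w⁻¹ fj : ℕ) ≤ (fi:ℕ) ∧ (∀ h : (fj:ℕ)+1 < n, (fi:ℕ) < (w⁻¹ ⟨(fj:ℕ)+1, h⟩ : ℕ))) := by
  have hi := fi.isLt
  have hj := fj.isLt
  simp only [Coess, Set.mem_setOf_eq]
  rw [ol_val w fi, ol_val w⁻¹ fj, lt_ol_succ_iff w fi (fj:ℕ) hj, lt_ol_succ_iff w⁻¹ fj (fi:ℕ) hi]
  constructor
  · rintro ⟨_, _, _, _, h5, h6, h7, h8⟩
    exact ⟨by omega, h6, by omega, h8⟩
  · rintro ⟨h5, h6, h7, h8⟩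
    exact ⟨by omega, by omega, by omega, by omega, by omega, h6, by omega, h8⟩

lemma coess_bounds {w : Equiv.Perm (Fin n)} {I J : ℕ} (h : (I, J) ∈ Coess w) :
    1 ≤ I ∧ I ≤ n ∧ 1 ≤ J ∧ J ≤ n := by
  obtain ⟨h1, h2, h3, h4, _⟩ := h
  exact ⟨h1, h2, h3, h4⟩

lemma coess_inv (w : Equiv.Perm (Fin n)) (I J : ℕ) :
    (I, J) ∈ Coess w ↔ (J, I) ∈ Coess w⁻¹ := by
  simp only [Coess, Set.mem_setOf_eq, inv_inv]
  tauto

end InvLemmas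
section CoreLemmas
variable {n : ℕ}

lemma coreA1 {w : Equiv.Perm (Fin n)} (hsm : ¬ Has3412 w) {i j : Fin n}
    (hij : i ≤ j)
    (h2 : ∀ h : (i:ℕ)+1 < n, (j:ℕ) < (w ⟨(i:ℕ)+1, h⟩ : ℕ))
    (h3 : w⁻¹ j ≤ i) :
    j ≤ Qmax w⁻¹ i := by
  by_contra hc
  push_neg at hc
  set p := Qmax w⁻¹ i with hp
  have hpj : (p:ℕ) < (j:ℕ) := hc
  have hipn : (i:ℕ) ≤ (p:ℕ) := self_le_Qmax w⁻¹ i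
  have hijN : (i:ℕ) < (j:ℕ) := by omega
  have hbN : (w⁻¹ j : ℕ) ≤ (i:ℕ) := h3
  have hpiN : (i:ℕ) < (p:ℕ) := by
    rcases lt_or_eq_of_le hipn with h | h
    · exact h
    exfalso
    have hpi : p = i := Fin.ext h.symm
    have hmaps : ∀ v ∈ Finset.Iic i, w⁻¹ v ∈ Finset.Iic i := by
      intro v hv
      have h5 := le_Qmax w⁻¹ (Finset.mem_Iic.1 hv)
      rw [← hp, hpi] at h5
      exact Finset.mem_Iic.2 h5
    have himg : Finset.image (fun x => w⁻¹ x) (Finset.Iic i) = Finset.Iic i := by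
      apply Finset.eq_of_subset_of_card_le (Finset.image_subset_iff.2 hmaps)
      rw [Finset.card_image_of_injective _ (Equiv.injective _)]
    have hmem : w⁻¹ j ∈ Finset.Iic i := Finset.mem_Iic.2 h3
    rw [← himg] at hmem
    obtain ⟨v, hv, hv2⟩ := Finset.mem_image.1 hmem
    have hvj : v = j := Equiv.injective _ hv2
    subst hvj
    have hvi : v ≤ i := Finset.mem_Iic.1 hv
    have : (v:ℕ) ≤ (i:ℕ) := hvi
    omega
  have hin : (i:ℕ)+1 < n := by have := j.isLt; omega
  set isu : Fin n := ⟨(i:ℕ)+1, hin⟩ with hsu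
  have hisuval : (isu : ℕ) = (i:ℕ)+1 := rfl
  have hwisu : (j:ℕ) < (w isu : ℕ) := h2 hin
  have hv0 : (w p : ℕ) ≤ (i:ℕ) := by
    obtain ⟨k, hk, hk2⟩ := Qmax_attained w⁻¹ i
    have h6 : w p = k := by rw [← hp] at hk2; rw [← hk2, Equiv.Perm.apply_inv_self]
    rw [h6]; exact hk
  have hpisu : (i:ℕ)+1 < (p:ℕ) := by
    rcases lt_or_eq_of_le (by omega : (i:ℕ)+1 ≤ (p:ℕ)) with h | h
    · exact h
    exfalso
    have h7 : isu = p := Fin.ext h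
    rw [← h7] at hv0
    omega
  by_cases hu : ∃ u : Fin n, (i:ℕ) < (u:ℕ) ∧ (u:ℕ) < (j:ℕ) ∧ (p:ℕ) < (w⁻¹ u : ℕ)
  · obtain ⟨u, hu1, hu2, hu3⟩ := hu
    apply hsm
    refine ⟨w⁻¹ j, isu, p, w⁻¹ u, Fin.lt_def.mpr (by omega), Fin.lt_def.mpr (by omega),
      Fin.lt_def.mpr (by omega), ?_, ?_, ?_⟩ <;>
      simp only [Equiv.Perm.apply_inv_self] <;> exact Fin.lt_def.mpr (by omega)
  · push_neg at hu
    have hmaps : ∀ x ∈ insert (w isu) (Finset.Iic j), w⁻¹ x ∈ Finset.Iic p := by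
      intro x hx
      rcases Finset.mem_insert.1 hx with rfl | hx
      · rw [Equiv.Perm.inv_apply_self]
        exact Finset.mem_Iic.2 (Fin.le_def.mpr (by omega))
      · have hxj' : x ≤ j := Finset.mem_Iic.1 hx
        have hxj : (x:ℕ) ≤ (j:ℕ) := hxj'
        rcases le_or_gt (x:ℕ) (i:ℕ) with hxi | hxi
        · exact Finset.mem_Iic.2 (by rw [hp]; exact le_Qmax w⁻¹ (Fin.le_def.mpr hxi))
        rcases lt_or_eq_of_le hxj with hxj2 | hxj2
        · exact Finset.mem_Iic.2 (Fin.le_def.mpr (hu x hxi hxj2))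
        · have hxeq : x = j := Fin.ext hxj2
          subst hxeq
          exact Finset.mem_Iic.2 (Fin.le_def.mpr (by omega))
    have hni : w isu ∉ Finset.Iic j := by
      intro h
      have h8 : w isu ≤ j := Finset.mem_Iic.1 h
      have : (w isu:ℕ) ≤ (j:ℕ) := h8
      omega
    have hcard := Finset.card_le_card_of_injOn (fun x => w⁻¹ x) hmaps
      (fun a _ b _ h => Equiv.injective _ h)
    rw [Finset.card_insert_of_notMem hni, Fin.card_Iic, Fin.card_Iic] at hcard
    omega

end CoreLemmas
section CoreLemmas2
variable {n : ℕ}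

lemma coreA2 {w : Equiv.Perm (Fin n)} (hsm : SmoothPerm w) {i j : Fin n}
    (hij : i ≤ j)
    (h1 : (w i : ℕ) ≤ (j : ℕ))
    (h2 : ∀ h : (i:ℕ)+1 < n, (j:ℕ) < (w ⟨(i:ℕ)+1, h⟩ : ℕ))
    (h3 : w⁻¹ j ≤ i)
    (h4 : ∀ h : (j:ℕ)+1 < n, (i:ℕ) < (w⁻¹ ⟨(j:ℕ)+1, h⟩ : ℕ)) :
    Qmax w i ≤ j ∨ Qmax w⁻¹ i ≤ j := by
  by_contra hcon
  push_neg at hcon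
  obtain ⟨hcQ, hcQ'⟩ := hcon
  have hijN : (i:ℕ) ≤ (j:ℕ) := hij
  -- the witness a with large value
  obtain ⟨a, hai, haW⟩ := Qmax_attained w i
  have haiN : (a:ℕ) ≤ (i:ℕ) := hai
  have hWj : (j:ℕ) < (w a : ℕ) := by rw [haW]; exact hcQ
  have haiS : (a:ℕ) < (i:ℕ) := by
    rcases lt_or_eq_of_le haiN with h | h
    · exact h
    · exfalso; have : a = i := Fin.ext h; subst this; omega
  have hjn : (j:ℕ)+1 < n := by have := (w a).isLt; omega
  set j1 : Fin n := ⟨(j:ℕ)+1, hjn⟩ with hj1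
  have hj1v : (j1:ℕ) = (j:ℕ)+1 := rfl
  set c := w⁻¹ j1 with hcdef
  have hwc : w c = j1 := Equiv.Perm.apply_inv_self w j1
  have hicN : (i:ℕ) < (c:ℕ) := h4 hjn
  have hW2 : (j:ℕ)+2 ≤ (w a : ℕ) := by
    rcases eq_or_ne (w a) j1 with h | h
    · exfalso
      have : a = c := by rw [hcdef, ← h, Equiv.Perm.inv_apply_self]
      rw [this] at haiN; omega
    · have : (w a : ℕ) ≠ (j:ℕ)+1 := fun hh => h (Fin.ext hh)
      omega
  have hin : (i:ℕ)+1 < n := by have := c.isLt; omega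
  set isu : Fin n := ⟨(i:ℕ)+1, hin⟩ with hsu
  have hisuval : (isu : ℕ) = (i:ℕ)+1 := rfl
  have hwisuN : (j:ℕ) < (w isu : ℕ) := h2 hin
  set p := Qmax w⁻¹ i with hp
  have hpjN : (j:ℕ) < (p:ℕ) := hcQ'
  set v := w p with hv
  have hviN : (v:ℕ) ≤ (i:ℕ) := by
    obtain ⟨k, hk, hk2⟩ := Qmax_attained w⁻¹ i
    have h6 : v = k := by rw [hv, hp, ← hk2, Equiv.Perm.apply_inv_self]
    rw [h6]; exact hk
  set b := w⁻¹ j with hbdef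
  have hwb : w b = j := Equiv.Perm.apply_inv_self w j
  have hbiN : (b:ℕ) ≤ (i:ℕ) := h3
  have hvjN : (v:ℕ) < (j:ℕ) := by
    rcases lt_or_eq_of_le (by omega : (v:ℕ) ≤ (j:ℕ)) with h | h
    · exact h
    exfalso
    have hveq : v = j := Fin.ext h
    have : p = b := by rw [hbdef, ← hveq, hv, Equiv.Perm.inv_apply_self]
    rw [this] at hpjN; omega
  have hpisuN : (i:ℕ)+1 < (p:ℕ) := by
    rcases lt_or_eq_of_le (by omega : (i:ℕ)+1 ≤ (p:ℕ)) with h | h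
    · exact h
    exfalso
    have h7 : isu = p := Fin.ext h
    have : w isu = v := by rw [h7, hv]
    omega
  have hcpne : (c:ℕ) ≠ (p:ℕ) := by
    intro h
    have h8 : c = p := Fin.ext h
    have : j1 = v := by rw [← hwc, h8, hv]
    have := congrArg Fin.val this
    omega
  -- the maximal-value element of Y
  have hpY : p ∈ Finset.univ.filter (fun y : Fin n => (i:ℕ) < (y:ℕ) ∧ (w y:ℕ) ≤ (j:ℕ)) := by
    simp only [Finset.mem_filter, Finset.mem_univ, true_and]
    rw [← hv]; omega
  obtain ⟨y0, hy0Y, hy0max⟩ := Finset.exists_max_image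
    (Finset.univ.filter (fun y : Fin n => (i:ℕ) < (y:ℕ) ∧ (w y:ℕ) ≤ (j:ℕ)))
    (fun y => (w y : ℕ)) ⟨p, hpY⟩
  simp only [Finset.mem_filter, Finset.mem_univ, true_and] at hy0Y
  obtain ⟨hy0i, hsj⟩ := hy0Y
  have hvs : (v:ℕ) ≤ (w y0 : ℕ) := by
    have := hy0max p hpY; rw [← hv] at this; exact this
  have hsjS : (w y0 : ℕ) < (j:ℕ) := by
    rcases lt_or_eq_of_le hsj with h | h
    · exact h
    exfalso
    have h9 : w y0 = j := Fin.ext h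
    have : y0 = b := by rw [hbdef, ← h9, Equiv.Perm.inv_apply_self]
    rw [this] at hy0i; omega
  have H3412 := hsm.1
  have H4231 := hsm.2
  rcases lt_or_gt_of_ne (show (a:ℕ) ≠ (b:ℕ) by
      intro h; have : a = b := Fin.ext h
      have : w a = j := by rw [this, hwb]
      omega) with hab | hba
  · -- case a < b
    rcases lt_or_gt_of_ne hcpne with hcp | hpc
    · -- 4231 at (a, b, c, p)
      refine H4231 ⟨a, b, c, p, Fin.lt_def.mpr (by omega), Fin.lt_def.mpr (by omega),
        Fin.lt_def.mpr (by omega), ?_, ?_, ?_⟩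
      · rw [hwb, ← hv]; exact Fin.lt_def.mpr (by omega)
      · rw [hwb, hwc]; exact Fin.lt_def.mpr (by omega)
      · rw [hwc]; exact Fin.lt_def.mpr (by omega)
    · -- p < c
      rcases lt_or_gt_of_ne (show (w isu : ℕ) ≠ (w a : ℕ) by
          intro h; have : isu = a := Equiv.injective w (Fin.ext h)
          have := congrArg Fin.val this; omega) with hWW | hWW
      · -- 4231 at (a, b, isu, p)
        refine H4231 ⟨a, b, isu, p, Fin.lt_def.mpr (by omega), Fin.lt_def.mpr (by omega),
          Fin.lt_def.mpr (by omega), ?_, ?_, ?_⟩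
        · rw [hwb, ← hv]; exact Fin.lt_def.mpr (by omega)
        · rw [hwb]; exact Fin.lt_def.mpr (by omega)
        · exact Fin.lt_def.mpr (by omega)
      · -- 3412 at (a, isu, p, c)
        refine H3412 ⟨a, isu, p, c, Fin.lt_def.mpr (by omega), Fin.lt_def.mpr (by omega),
          Fin.lt_def.mpr (by omega), ?_, ?_, ?_⟩
        · rw [hwc, ← hv]; exact Fin.lt_def.mpr (by omega)
        · rw [hwc]; exact Fin.lt_def.mpr (by omega)
        · exact Fin.lt_def.mpr (by omega)
  · -- case b < a
    rcases lt_or_gt_of_ne (show (w i : ℕ) ≠ (w y0 : ℕ) by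
        intro h; have : i = y0 := Equiv.injective w (Fin.ext h)
        have := congrArg Fin.val this; omega) with his | his
    · -- 3412 at (b, a, i, y0)
      refine H3412 ⟨b, a, i, y0, Fin.lt_def.mpr (by omega), Fin.lt_def.mpr (by omega),
        Fin.lt_def.mpr (by omega), ?_, ?_, ?_⟩
      · exact Fin.lt_def.mpr (by omega)
      · rw [hwb]; exact Fin.lt_def.mpr (by omega)
      · rw [hwb]; exact Fin.lt_def.mpr (by omega)
    · -- w y0 < w i
      rcases lt_or_gt_of_ne hcpne with hcp | hpc
      · -- 4231 at (a, i, c, p)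
        refine H4231 ⟨a, i, c, p, Fin.lt_def.mpr (by omega), Fin.lt_def.mpr (by omega),
          Fin.lt_def.mpr (by omega), ?_, ?_, ?_⟩
        · rw [← hv]; exact Fin.lt_def.mpr (by omega)
        · rw [hwc]; exact Fin.lt_def.mpr (by omega)
        · rw [hwc]; exact Fin.lt_def.mpr (by omega)
      · -- p < c
        rcases lt_or_gt_of_ne (show (w isu : ℕ) ≠ (w a : ℕ) by
            intro h; have : isu = a := Equiv.injective w (Fin.ext h)
            have := congrArg Fin.val this; omega) with hWW | hWW
        · -- 4231 at (a, i, isu, p)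
          refine H4231 ⟨a, i, isu, p, Fin.lt_def.mpr (by omega), Fin.lt_def.mpr (by omega),
            Fin.lt_def.mpr (by omega), ?_, ?_, ?_⟩
          · rw [← hv]; exact Fin.lt_def.mpr (by omega)
          · exact Fin.lt_def.mpr (by omega)
          · exact Fin.lt_def.mpr (by omega)
        · -- 3412 at (a, isu, p, c)
          refine H3412 ⟨a, isu, p, c, Fin.lt_def.mpr (by omega), Fin.lt_def.mpr (by omega),
            Fin.lt_def.mpr (by omega), ?_, ?_, ?_⟩
          · rw [hwc, ← hv]; exact Fin.lt_def.mpr (by omega)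
          · rw [hwc]; exact Fin.lt_def.mpr (by omega)
          · exact Fin.lt_def.mpr (by omega)

end CoreLemmas2
section CLemmas
variable {n : ℕ}

lemma coreC1 {w : Equiv.Perm (Fin n)} {i : Fin n} (hin : (i:ℕ)+1 < n)
    (hQ : Qmax w i ≤ Qmax w⁻¹ i)
    (hlt : Qmax w i < Qmax w ⟨(i:ℕ)+1, hin⟩) :
    ((i:ℕ)+1, (Qmax w i : ℕ)+1) ∈ Coess w := by
  rw [coess_iff]
  refine ⟨Fin.le_def.mp (le_Qmax w le_rfl), ?_, ?_, ?_⟩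
  · intro h
    obtain ⟨k, hk, hk2⟩ := Qmax_attained w ⟨(i:ℕ)+1, h⟩
    have hkv : (k:ℕ) ≤ (i:ℕ)+1 := hk
    rcases le_or_gt (k:ℕ) (i:ℕ) with hki | hki
    · exfalso
      have h5 := le_Qmax w (show k ≤ i from Fin.le_def.mpr hki)
      rw [hk2] at h5
      have h6 : (Qmax w ⟨(i:ℕ)+1, h⟩ : ℕ) ≤ (Qmax w i : ℕ) := h5
      have h7 : (Qmax w i : ℕ) < (Qmax w ⟨(i:ℕ)+1, hin⟩ : ℕ) := hlt
      omega
    · have hke : k = ⟨(i:ℕ)+1, h⟩ := Fin.ext (show (k:ℕ) = (i:ℕ)+1 by omega)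
      rw [hke] at hk2
      rw [hk2]
      exact hlt
  · obtain ⟨k, hk, hk2⟩ := Qmax_attained w i
    have : w⁻¹ (Qmax w i) = k := by rw [← hk2, Equiv.Perm.inv_apply_self]
    rw [this]
    exact hk
  · intro h
    by_contra hcon
    push_neg at hcon
    have h5 := le_Qmax w (show w⁻¹ ⟨(Qmax w i : ℕ)+1, h⟩ ≤ i from Fin.le_def.mpr hcon)
    rw [Equiv.Perm.apply_inv_self] at h5
    have : (Qmax w i : ℕ)+1 ≤ (Qmax w i : ℕ) := h5
    omega

lemma coreC {w : Equiv.Perm (Fin n)} {i : Fin n} (hin : (i:ℕ)+1 < n)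
    (hlt : min (Qmax w i : ℕ) (Qmax w⁻¹ i : ℕ) <
      min (Qmax w ⟨(i:ℕ)+1, hin⟩ : ℕ) (Qmax w⁻¹ ⟨(i:ℕ)+1, hin⟩ : ℕ)) :
    ((i:ℕ)+1, min (Qmax w i : ℕ) (Qmax w⁻¹ i : ℕ) + 1) ∈ Coess w ∨
      (min (Qmax w i : ℕ) (Qmax w⁻¹ i : ℕ) + 1, (i:ℕ)+1) ∈ Coess w := by
  rcases le_total (Qmax w i : ℕ) (Qmax w⁻¹ i : ℕ) with hQ | hQ
  · rw [min_eq_left hQ] at hlt ⊢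
    left
    exact coreC1 hin (Fin.le_def.mpr hQ)
      (Fin.lt_def.mpr (lt_of_lt_of_le hlt (min_le_left _ _)))
  · rw [min_eq_right hQ] at hlt ⊢
    right
    rw [coess_inv]
    exact coreC1 (w := w⁻¹) hin
      (by simp only [inv_inv]; exact Fin.le_def.mpr hQ)
      (Fin.lt_def.mpr (lt_of_lt_of_le hlt (min_le_right _ _)))

end CLemmas
section MainAssembly
variable {n : ℕ}

lemma coreA {w : Equiv.Perm (Fin n)} (hw : SmoothPerm w) {i jf : Fin n} (hij : i ≤ jf)
    (hmem : ((i:ℕ)+1, (jf:ℕ)+1) ∈ Coess w) :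
    min (Qmax w i : ℕ) (Qmax w⁻¹ i : ℕ) = (jf:ℕ) := by
  rw [coess_iff] at hmem
  obtain ⟨k1, k2, k3, k4⟩ := hmem
  have h3f : w⁻¹ jf ≤ i := Fin.le_def.mpr k3
  have hA1 : jf ≤ Qmax w⁻¹ i := coreA1 hw.1 hij k2 h3f
  have hQ : jf ≤ Qmax w i := by
    have h5 := le_Qmax w h3f
    rw [Equiv.Perm.apply_inv_self] at h5
    exact h5
  have hA2 := coreA2 hw hij k1 k2 h3f k4
  have b1 : (jf:ℕ) ≤ (Qmax w i:ℕ) := hQ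
  have b2 : (jf:ℕ) ≤ (Qmax w⁻¹ i:ℕ) := hA1
  rcases hA2 with h | h
  · have : (Qmax w i:ℕ) ≤ (jf:ℕ) := h; omega
  · have : (Qmax w⁻¹ i:ℕ) ≤ (jf:ℕ) := h; omega

lemma m_eq {w : Equiv.Perm (Fin n)} (hw : SmoothPerm w) (m : ℕ → ℕ)
    (hmI : ∀ i j : ℕ, i ≤ j → ((i, j) ∈ Coess w ∨ (j, i) ∈ Coess w) → m i = j)
    (hmNI : ∀ i : ℕ, 1 ≤ i → i < n →
      (∀ j, i ≤ j → (i, j) ∉ Coess w ∧ (j, i) ∉ Coess w) → m i = m (i + 1)) :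
    ∀ i : Fin n, m ((i:ℕ)+1) = min (Qmax w i : ℕ) (Qmax w⁻¹ i : ℕ) + 1 := by
  suffices H : ∀ d : ℕ, ∀ i : Fin n, n - 1 - (i:ℕ) = d →
      m ((i:ℕ)+1) = min (Qmax w i : ℕ) (Qmax w⁻¹ i : ℕ) + 1 by
    intro i; exact H _ i rfl
  intro d
  induction d using Nat.strong_induction_on with
  | _ d IH =>
    intro i hd
    by_cases hlast : (i:ℕ)+1 = n
    · have htop : ∀ u : Equiv.Perm (Fin n), (Qmax u i : ℕ) = (i:ℕ) := by
        intro u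
        have h1 := (Qmax u i).isLt
        have h2 := le_Qmax u (show u⁻¹ i ≤ i from Fin.le_def.mpr (by have := (u⁻¹ i).isLt; omega))
        rw [Equiv.Perm.apply_inv_self] at h2
        have h3 : (i:ℕ) ≤ (Qmax u i : ℕ) := h2
        omega
      have hmem : ((i:ℕ)+1, (i:ℕ)+1) ∈ Coess w := by
        rw [coess_iff]
        refine ⟨by have := (w i).isLt; omega, ?_, by have := (w⁻¹ i).isLt; omega, ?_⟩
        · intro h; exact absurd h (by omega)
        · intro h; exact absurd h (by omega)
      have hm := hmI ((i:ℕ)+1) ((i:ℕ)+1) le_rfl (Or.inl hmem)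
      rw [hm, htop w, htop w⁻¹]
      omega
    · have hin : (i:ℕ)+1 < n := by have := i.isLt; omega
      set isu : Fin n := ⟨(i:ℕ)+1, hin⟩ with hsu
      have hisv : (isu:ℕ) = (i:ℕ)+1 := rfl
      have hIH := IH (n - 1 - (isu:ℕ)) (by omega) isu rfl
      by_cases hex : ∃ J : ℕ, (i:ℕ)+1 ≤ J ∧ (((i:ℕ)+1, J) ∈ Coess w ∨ (J, (i:ℕ)+1) ∈ Coess w)
      · obtain ⟨J, hJle, hJmem⟩ := hex
        have hm := hmI ((i:ℕ)+1) J hJle hJmem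
        have hJb : 1 ≤ J ∧ J ≤ n := by
          rcases hJmem with h | h
          · have := coess_bounds h; exact ⟨this.2.2.1, this.2.2.2⟩
          · have := coess_bounds h; exact ⟨this.1, this.2.1⟩
        set jf : Fin n := ⟨J-1, by omega⟩ with hjf
        have hjfv : (jf:ℕ) = J - 1 := rfl
        have hJeq : (jf:ℕ)+1 = J := by omega
        have hijf : i ≤ jf := Fin.le_def.mpr (by omega)
        have hkey : min (Qmax w i : ℕ) (Qmax w⁻¹ i : ℕ) = (jf:ℕ) := by
          rcases hJmem with hmem | hmem
          · rw [← hJeq] at hmem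
            exact coreA hw hijf hmem
          · rw [← hJeq] at hmem
            rw [coess_inv] at hmem
            have h2 := coreA (w := w⁻¹) (smoothPerm_inv hw) hijf hmem
            rw [inv_inv] at h2
            omega
        rw [hm, hkey]
        omega
      · push_neg at hex
        have hNI := hmNI ((i:ℕ)+1) (by omega) (by omega)
          (fun J hJ => hex J hJ)
        have hmono : min (Qmax w i:ℕ) (Qmax w⁻¹ i:ℕ) ≤ min (Qmax w isu:ℕ) (Qmax w⁻¹ isu:ℕ) := by
          have m1 : Qmax w i ≤ Qmax w isu := Qmax_mono w (Fin.le_def.mpr (by omega))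
          have m2 : Qmax w⁻¹ i ≤ Qmax w⁻¹ isu := Qmax_mono w⁻¹ (Fin.le_def.mpr (by omega))
          have m1' : (Qmax w i:ℕ) ≤ (Qmax w isu:ℕ) := m1
          have m2' : (Qmax w⁻¹ i:ℕ) ≤ (Qmax w⁻¹ isu:ℕ) := m2
          omega
        rcases lt_or_eq_of_le hmono with hlt | heq
        · exfalso
          have hge : (i:ℕ) ≤ min (Qmax w i:ℕ) (Qmax w⁻¹ i:ℕ) := by
            have g1 : (i:ℕ) ≤ (Qmax w i:ℕ) := self_le_Qmax w i
            have g2 : (i:ℕ) ≤ (Qmax w⁻¹ i:ℕ) := self_le_Qmax w⁻¹ i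
            omega
          rcases coreC hin hlt with hC | hC
          · exact (hex _ (by omega)).1 hC
          · exact (hex _ (by omega)).2 hC
        · rw [hNI, show (i:ℕ)+1+1 = (isu:ℕ)+1 from rfl, hIH]
          omega

end MainAssembly

theorem stmt3' {n : ℕ} (w : Equiv.Perm (Fin n)) (hw : SmoothPerm w) (m : ℕ → ℕ)
    (hmI : ∀ i j : ℕ, i ≤ j → ((i, j) ∈ Coess w ∨ (j, i) ∈ Coess w) → m i = j)
    (hmNI : ∀ i : ℕ, 1 ≤ i → i < n →
      (∀ j, i ≤ j → (i, j) ∉ Coess w ∧ (j, i) ∉ Coess w) → m i = m (i + 1)) :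
    ∀ i j : Fin n, i < j →
      (BruhatLE (Equiv.swap i j) w ↔ (j : ℕ) + 1 ≤ m ((i : ℕ) + 1)) := by
  intro i j hij
  rw [bruhat_swap_iff_Qmax w hij, m_eq hw m hmI hmNI i]
  constructor
  · rintro ⟨ha, hb⟩
    have ha' : (j:ℕ) ≤ (Qmax w i : ℕ) := ha
    have hb' : (j:ℕ) ≤ (Qmax w⁻¹ i : ℕ) := hb
    omega
  · intro h
    exact ⟨Fin.le_def.mpr (by omega), Fin.le_def.mpr (by omega)⟩
/-- For a smooth permutation `w` with associated Hessenberg function `m` (1-indexed),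
a transposition `(i j)` with `i < j` is `≤ w` in Bruhat order iff `j ≤ m i`. -/
theorem stmt3 {n : ℕ} (w : Equiv.Perm (Fin n)) (hw : SmoothPerm w) (m : ℕ → ℕ)
    (hmI : ∀ i j : ℕ, i ≤ j → ((i, j) ∈ Coess w ∨ (j, i) ∈ Coess w) → m i = j)
    (hmNI : ∀ i : ℕ, 1 ≤ i → i < n →
      (∀ j, i ≤ j → (i, j) ∉ Coess w ∧ (j, i) ∉ Coess w) → m i = m (i + 1)) :
    ∀ i j : Fin n, i < j →
      (BruhatLE (Equiv.swap i j) w ↔ (j : ℕ) + 1 ≤ m ((i : ℕ) + 1)) := by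
  exact stmt3' w hw m hmI hmNI
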